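/- With the characteristic vector assignment as above, if U and U' are distinct column operators with equal characteristic vectors b(U) = b(U') = b and equal characteristic operators V(U) = V(U'), then U'' = U·U' satisfies b(U'') > b. -/
import Mathlib


/-- The Pauli group modulo phases on a composite particle of `v` qubits, as an
`F₂`-vector space (so multiplication of Pauli operators is written additively and
the identity is `0`). -/
abbrev PauliMP (v : ℕ) := (Fin v → ZMod 2) × (Fin v → ZMod 2)

/-- `f₀` halves the length of a column operator: `f₀(U)_j = U_j · U_{j + 2^{m}}`. -/
def colF0 (v m : ℕ) (U : Fin (2 ^ (m + 1)) → PauliMP v) : Fin (2 ^ m) → PauliMP v :=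
  fun j =>
    U ⟨j.val, lt_of_lt_of_le j.isLt (Nat.pow_le_pow_right (by norm_num) (Nat.le_succ m))⟩ +
    U ⟨j.val + 2 ^ m, by
        have h := j.isLt
        have h2 : 2 ^ (m + 1) = 2 ^ m + 2 ^ m := by ring
        omega⟩

/-- `f₁` truncates a column operator to its first half: `f₁(U)_j = U_j`. -/
def colF1 (v m : ℕ) (U : Fin (2 ^ (m + 1)) → PauliMP v) : Fin (2 ^ m) → PauliMP v :=
  fun j =>
    U ⟨j.val, lt_of_lt_of_le j.isLt (Nat.pow_le_pow_right (by norm_num) (Nat.le_succ m))⟩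

/-- The characteristic data `(b(U), V(U))` of a column operator `U` on `2^m`
composite particles: iteratively, `b_m = 1` and recurse on `f₁(U)` if `f₀(U) = I`,
else `b_m = 0` and recurse on `f₀(U)`; the characteristic operator `V(U)` is the
single Pauli element remaining after `m` steps.  (The bit `b_i` of the paper is
`(charData v m U).1 ⟨i-1, _⟩`.) -/
def charData (v : ℕ) : (m : ℕ) → (Fin (2 ^ m) → PauliMP v) → (Fin m → Bool) × PauliMP v
  | 0, U => (Fin.elim0, U ⟨0, by norm_num⟩)
  | m + 1, U =>
    if colF0 v m U = 0 then
      (Fin.snoc (charData v m (colF1 v m U)).1 true, (charData v m (colF1 v m U)).2)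
    else
      (Fin.snoc (charData v m (colF0 v m U)).1 false, (charData v m (colF0 v m U)).2)

/-- The numerical value `g(b) = Σ b_j 2^{j-1}` of a binary vector, giving the order
on characteristic vectors. -/
def gval {m : ℕ} (b : Fin m → Bool) : ℕ :=
  ∑ j, if b j then 2 ^ (j : ℕ) else 0

lemma pauli_add_self {v : ℕ} (x : PauliMP v) : x + x = 0 := by
  have h2 : (2 : ZMod 2) = 0 := rfl
  calc x + x = (2 : ZMod 2) • x := (two_smul _ x).symm
  _ = 0 := by rw [h2, zero_smul]

lemma colF0_add (v m : ℕ) (U U' : Fin (2 ^ (m + 1)) → PauliMP v) :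
    colF0 v m (U + U') = colF0 v m U + colF0 v m U' := by
  funext j
  simp only [colF0, Pi.add_apply]
  abel

lemma colF1_add (v m : ℕ) (U U' : Fin (2 ^ (m + 1)) → PauliMP v) :
    colF1 v m (U + U') = colF1 v m U + colF1 v m U' := by
  funext j
  simp only [colF1, Pi.add_apply]

/-- If `f₀ U = 0` then `U` is determined by `f₁ U`. -/
lemma eq_of_colF0_zero (v m : ℕ) (U U' : Fin (2 ^ (m + 1)) → PauliMP v)
    (h : colF0 v m U = 0) (h' : colF0 v m U' = 0)
    (h1 : colF1 v m U = colF1 v m U') : U = U' := by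
  have h2 : 2 ^ (m + 1) = 2 ^ m + 2 ^ m := by ring
  have key : ∀ (W : Fin (2 ^ (m + 1)) → PauliMP v), colF0 v m W = 0 →
      ∀ j : Fin (2 ^ m),
        W ⟨j.val + 2 ^ m, by have := j.isLt; omega⟩ =
        W ⟨j.val, by have := j.isLt; omega⟩ := by
    intro W hW j
    have hW0 := congrFun hW j
    simp only [colF0, Pi.zero_apply] at hW0
    have := congrArg (fun z => W ⟨j.val, by have := j.isLt; omega⟩ + z) hW0
    simpa [← add_assoc, pauli_add_self] using this
  funext i
  by_cases hc : i.val < 2 ^ m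
  · have := congrFun h1 ⟨i.val, hc⟩
    simp only [colF1] at this
    exact this
  · have hj : i.val - 2 ^ m < 2 ^ m := by have := i.isLt; omega
    have hi : i = ⟨(⟨i.val - 2 ^ m, hj⟩ : Fin (2 ^ m)).val + 2 ^ m, by
        have := i.isLt; simp; omega⟩ := Fin.ext (by simp; omega)
    rw [hi, key U h ⟨i.val - 2 ^ m, hj⟩, key U' h' ⟨i.val - 2 ^ m, hj⟩]
    have := congrFun h1 ⟨i.val - 2 ^ m, hj⟩
    simp only [colF1] at this
    exact this

lemma ne_zero_of_colF0_zero (v m : ℕ) (U : Fin (2 ^ (m + 1)) → PauliMP v)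
    (h : colF0 v m U = 0) (hU : U ≠ 0) : colF1 v m U ≠ 0 := by
  intro hc
  apply hU
  apply eq_of_colF0_zero v m U 0 h
  · funext j; simp [colF0]
  · rw [hc]; funext j; simp [colF1]

lemma gval_snoc {m : ℕ} (b : Fin m → Bool) (x : Bool) :
    gval (Fin.snoc b x) = gval b + if x then 2 ^ m else 0 := by
  simp [gval, Fin.sum_univ_castSucc]

lemma gval_lt {m : ℕ} (b : Fin m → Bool) : gval b < 2 ^ m := by
  induction m with
  | zero => simp [gval]
  | succ n ih =>
    rw [← Fin.snoc_init_self b, gval_snoc]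
    have := ih (Fin.init b)
    have h2 : 2 ^ (n + 1) = 2 ^ n + 2 ^ n := by ring
    split <;> omega


/-- If `U` and `U'` are distinct (nonidentity) column operators with equal
characteristic vectors `b(U) = b(U') = b` and equal characteristic operators
`V(U) = V(U')`, then `U'' = U · U'` has characteristic vector `b(U'') > b`. -/
theorem charData_mul_of_eq (v m : ℕ) (U U' : Fin (2 ^ m) → PauliMP v)
    (hU : U ≠ 0) (hU' : U' ≠ 0) (hne : U ≠ U')
    (hb : (charData v m U).1 = (charData v m U').1)
    (hV : (charData v m U).2 = (charData v m U').2) :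
    gval (charData v m (U + U')).1 > gval (charData v m U).1 := by
  induction m with
  | zero =>
    exfalso
    apply hne
    funext i
    have hi : i = ⟨0, by norm_num⟩ := Fin.ext (by omega)
    rw [hi]
    simpa [charData] using hV
  | succ n ih =>
    by_cases h : colF0 v n U = 0 <;> by_cases h' : colF0 v n U' = 0
    · -- both bits true
      have hsum : colF0 v n (U + U') = 0 := by rw [colF0_add, h, h', add_zero]
      simp only [charData, h, h', hsum, if_pos] at hb hV ⊢
      have hb' : (charData v n (colF1 v n U)).1 = (charData v n (colF1 v n U')).1 := by
        have := congrArg Fin.init hb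
        simpa [Fin.init_snoc] using this
      rw [colF1_add, gval_snoc, gval_snoc]
      have := ih (colF1 v n U) (colF1 v n U')
        (ne_zero_of_colF0_zero v n U h hU) (ne_zero_of_colF0_zero v n U' h' hU')
        (fun hc => hne (eq_of_colF0_zero v n U U' h h' hc)) hb' hV
      omega
    · -- contradiction: bits differ
      exfalso
      simp only [charData, h, h', if_pos, if_neg, not_false_iff] at hb
      have := congrFun hb (Fin.last n)
      simp [Fin.snoc_last] at this
    · exfalso
      simp only [charData, h, h', if_pos, if_neg, not_false_iff] at hb
      have := congrFun hb (Fin.last n)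
      simp [Fin.snoc_last] at this
    · -- both bits false
      simp only [charData, h, h', if_neg, not_false_iff] at hb hV ⊢
      have hb' : (charData v n (colF0 v n U)).1 = (charData v n (colF0 v n U')).1 := by
        have := congrArg Fin.init hb
        simpa [Fin.init_snoc] using this
      by_cases hsum : colF0 v n (U + U') = 0
      · simp only [hsum, if_pos]
        rw [gval_snoc, gval_snoc]
        have := gval_lt (charData v n (colF0 v n U)).1
        simp only [if_true]
        simp only [show ((false : Bool) = true) = False by simp, if_false]
        omega
      · simp only [hsum, if_neg, not_false_iff]
        rw [colF0_add] at hsum ⊢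
        have hdiff : colF0 v n U ≠ colF0 v n U' := by
          intro hc
          apply hsum
          rw [hc]
          funext j
          simp [pauli_add_self]
        have := ih (colF0 v n U) (colF0 v n U') h h' hdiff hb' hV
        rw [gval_snoc, gval_snoc]
        simpa using this
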